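/- There holds wᵀ A (2λ_r I − A)^{−1} e_1 = (2λ_r / (2λ_r + (N−1)λ_c)) · Σ_{k=1}^{N} ( (k−1)/(N−1) · ∏_{j=1}^{k−1} a_j ), where a_j = j(N−j)λ_c / (2λ_r + (j+1)(N−j−1)λ_c) for j = 1,…,N−1. -/

import Mathlib

open Matrix Finset


private lemma aux_mulVec0 {N : ℕ} (M : Matrix (Fin N) (Fin N) ℝ) (d e : ℕ → ℝ)
    (hM : ∀ i j : Fin N, M i j = if (i : ℕ) = (j : ℕ) then d (i : ℕ)
      else if (i : ℕ) = (j : ℕ) + 1 then e (j : ℕ) else 0)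
    (v : Fin N → ℝ) (h0 : 0 < N) :
    (M *ᵥ v) ⟨0, h0⟩ = d 0 * v ⟨0, h0⟩ := by
  have key : ∀ j : Fin N, M ⟨0, h0⟩ j * v j
      = if j = ⟨0, h0⟩ then d 0 * v ⟨0, h0⟩ else 0 := by
    intro j
    rcases j with ⟨n, hn⟩
    rw [hM]
    rcases eq_or_ne n 0 with rfl | h1
    · simp
    · have c1 : ¬ ((⟨0, h0⟩ : Fin N) : ℕ) = ((⟨n, hn⟩ : Fin N) : ℕ) := by
        simpa using fun h => h1 h.symm
      have c2 : ¬ ((⟨0, h0⟩ : Fin N) : ℕ) = ((⟨n, hn⟩ : Fin N) : ℕ) + 1 := by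
        simp
      have c3 : ¬ ((⟨n, hn⟩ : Fin N)) = (⟨0, h0⟩ : Fin N) := by
        simpa [Fin.ext_iff] using h1
      rw [if_neg c1, if_neg c2, zero_mul, if_neg c3]
  show ∑ j, M ⟨0, h0⟩ j * v j = _
  rw [Finset.sum_congr rfl fun j _ => key j, Finset.sum_ite_eq' univ]
  simp

private lemma aux_mulVecS {N : ℕ} (M : Matrix (Fin N) (Fin N) ℝ) (d e : ℕ → ℝ)
    (hM : ∀ i j : Fin N, M i j = if (i : ℕ) = (j : ℕ) then d (i : ℕ)
      else if (i : ℕ) = (j : ℕ) + 1 then e (j : ℕ) else 0)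
    (v : Fin N → ℝ) (m : ℕ) (hk : m + 1 < N) :
    (M *ᵥ v) ⟨m + 1, hk⟩ = d (m + 1) * v ⟨m + 1, hk⟩ + e m * v ⟨m, by omega⟩ := by
  have key : ∀ j : Fin N, M ⟨m + 1, hk⟩ j * v j
      = (if j = ⟨m + 1, hk⟩ then d (m + 1) * v ⟨m + 1, hk⟩ else 0)
      + (if j = ⟨m, by omega⟩ then e m * v ⟨m, by omega⟩ else 0) := by
    intro j
    rcases j with ⟨n, hn⟩
    rw [hM]
    rcases eq_or_ne (m + 1) n with rfl | h1
    · simp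
    · rcases eq_or_ne m n with rfl | h2
      · rw [if_neg (by simp : ¬ ((⟨m + 1, hk⟩ : Fin N) : ℕ) = ((⟨m, hn⟩ : Fin N) : ℕ)),
          if_pos (by simp),
          if_neg (by simp [Fin.ext_iff] : ¬ ((⟨m, hn⟩ : Fin N)) = (⟨m + 1, hk⟩ : Fin N)),
          if_pos (by simp [Fin.ext_iff])]
        simp
      · have c1 : ¬ ((⟨m + 1, hk⟩ : Fin N) : ℕ) = ((⟨n, hn⟩ : Fin N) : ℕ) := by
          simpa using h1
        have c2 : ¬ ((⟨m + 1, hk⟩ : Fin N) : ℕ) = ((⟨n, hn⟩ : Fin N) : ℕ) + 1 := by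
          simp; omega
        have c3 : ¬ ((⟨n, hn⟩ : Fin N)) = (⟨m + 1, hk⟩ : Fin N) := by
          simpa [Fin.ext_iff] using fun h => h1 h.symm
        have c4 : ¬ ((⟨n, hn⟩ : Fin N)) = (⟨m, by omega⟩ : Fin N) := by
          simpa [Fin.ext_iff] using fun h => h2 h.symm
        rw [if_neg c1, if_neg c2, zero_mul, if_neg c3, if_neg c4, add_zero]
  show ∑ j, M ⟨m + 1, hk⟩ j * v j = _
  rw [Finset.sum_congr rfl fun j _ => key j, Finset.sum_add_distrib,
    Finset.sum_ite_eq' univ, Finset.sum_ite_eq' univ]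
  simp

private lemma aux_rec (N : ℕ) (lc lr : ℝ) (hlc : 0 < lc) (hlr : 0 < lr)
    (a : ℕ → ℝ)
    (ha : ∀ j : ℕ, a j =
      (j : ℝ) * ((N : ℝ) - (j : ℝ)) * lc /
        (2 * lr + ((j : ℝ) + 1) * ((N : ℝ) - (j : ℝ) - 1) * lc))
    (k : ℕ) (hk : k + 2 ≤ N) :
    a (k + 1) * (2 * lr + ((k : ℝ) + 2) * ((N : ℝ) - (k : ℝ) - 2) * lc)
      = ((k : ℝ) + 1) * ((N : ℝ) - (k : ℝ) - 1) * lc := by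
  have hNk : ((k : ℝ)) + 2 ≤ (N : ℝ) := by exact_mod_cast hk
  have h1 : (0:ℝ) ≤ ((k : ℝ) + 2) * ((N : ℝ) - (k : ℝ) - 2) * lc :=
    mul_nonneg (mul_nonneg (by positivity) (by linarith)) hlc.le
  have hden : 0 < 2 * lr + ((k : ℝ) + 2) * ((N : ℝ) - (k : ℝ) - 2) * lc := by linarith
  have hcast : ((k + 1 : ℕ) : ℝ) = (k : ℝ) + 1 := by push_cast; ring
  have hde : 2 * lr + ((k : ℝ) + 1 + 1) * ((N : ℝ) - ((k : ℝ) + 1) - 1) * lc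
      = 2 * lr + ((k : ℝ) + 2) * ((N : ℝ) - (k : ℝ) - 2) * lc := by ring
  rw [ha, hcast, hde, div_mul_cancel₀ _ hden.ne']
  ring

private lemma aux_key (N : ℕ) (lc lr : ℝ) (hlc : 0 < lc) (hlr : 0 < lr)
    (a : ℕ → ℝ)
    (ha : ∀ j : ℕ, a j =
      (j : ℝ) * ((N : ℝ) - (j : ℝ)) * lc /
        (2 * lr + ((j : ℝ) + 1) * ((N : ℝ) - (j : ℝ) - 1) * lc)) :
    ∀ m, m + 1 ≤ N →
      ∑ j ∈ Finset.range (m + 1),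
          ((((j : ℝ) + 1) * ((N : ℝ) - (j : ℝ) - 1) * lc - 2 * lr * (j : ℝ))
            * ∏ i ∈ Finset.Icc 1 j, a i)
        = ((m : ℝ) + 1) * ((((m : ℝ) + 1) * ((N : ℝ) - (m : ℝ) - 1) * lc)
            * ∏ i ∈ Finset.Icc 1 m, a i) := by
  intro m
  induction m with
  | zero => intro _; norm_num
  | succ k ih =>
    intro hk
    rw [Finset.sum_range_succ, ih (by omega),
      Finset.prod_Icc_succ_top (by omega : 1 ≤ k + 1)]
    have hrec := aux_rec N lc lr hlc hlr a ha k (by omega)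
    push_cast
    linear_combination (-((k : ℝ) + 1)) * (∏ i ∈ Finset.Icc 1 k, a i) * hrec

/-- Intermediate identity in the appendix proof of Corollary 1:
`wᵀ A (2λ_r I - A)⁻¹ e₁ = (2λ_r/(2λ_r + (N-1)λ_c)) · Σ_{k=1}^{N} ((k-1)/(N-1) ∏_{j=1}^{k-1} a_j)`
with `a_j = j(N-j)λ_c / (2λ_r + (j+1)(N-j-1)λ_c)`. -/
theorem infection_bound_intermediate (N : ℕ) (hN : 2 ≤ N) (lc lr : ℝ)
    (hlc : 0 < lc) (hlr : 0 < lr)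
    (A : Matrix (Fin N) (Fin N) ℝ)
    (hA : ∀ i j : Fin N, A i j =
      if (i : ℕ) = (j : ℕ) then
        -((((i : ℕ) : ℝ) + 1) * ((N : ℝ) - (((i : ℕ) : ℝ) + 1)) * lc)
      else if (i : ℕ) = (j : ℕ) + 1 then
        (((j : ℕ) : ℝ) + 1) * ((N : ℝ) - (((j : ℕ) : ℝ) + 1)) * lc
      else 0)
    (w : Fin N → ℝ) (hw : ∀ k : Fin N, w k = ((k : ℕ) : ℝ) / ((N : ℝ) - 1))
    (e1 : Fin N → ℝ) (he1 : ∀ j : Fin N, e1 j = if (j : ℕ) = 0 then 1 else 0)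
    (a : ℕ → ℝ)
    (ha : ∀ j : ℕ, a j =
      (j : ℝ) * ((N : ℝ) - (j : ℝ)) * lc /
        (2 * lr + ((j : ℝ) + 1) * ((N : ℝ) - (j : ℝ) - 1) * lc)) :
    w ⬝ᵥ (A *ᵥ ((((2 * lr) • (1 : Matrix (Fin N) (Fin N) ℝ) - A)⁻¹) *ᵥ e1))
      = (2 * lr / (2 * lr + ((N : ℝ) - 1) * lc)) *
          ∑ k ∈ Finset.Icc 1 N,
            (((k : ℝ) - 1) / ((N : ℝ) - 1) * ∏ j ∈ Finset.Icc 1 (k - 1), a j) := by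
  have hN2 : (2 : ℝ) ≤ (N : ℝ) := by exact_mod_cast hN
  have hN1 : ((N : ℝ) - 1) ≠ 0 := by linarith
  set D : ℝ := 2 * lr + ((N : ℝ) - 1) * lc with hD
  have hD0 : 0 < D := by
    have : 0 < ((N : ℝ) - 1) * lc := by nlinarith
    rw [hD]; linarith
  set M : Matrix (Fin N) (Fin N) ℝ := (2 * lr) • (1 : Matrix (Fin N) (Fin N) ℝ) - A with hMdef
  set X : Fin N → ℝ := fun i => (∏ j ∈ Finset.Icc 1 (i : ℕ), a j) / D with hX
  -- entries of M
  have hMent : ∀ i j : Fin N, M i j =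
      if (i : ℕ) = (j : ℕ) then
        2 * lr + (((i : ℕ) : ℝ) + 1) * ((N : ℝ) - ((i : ℕ) : ℝ) - 1) * lc
      else if (i : ℕ) = (j : ℕ) + 1 then
        -((((j : ℕ) : ℝ) + 1) * ((N : ℝ) - ((j : ℕ) : ℝ) - 1) * lc)
      else 0 := by
    intro i j
    simp only [hMdef, Matrix.sub_apply, Matrix.smul_apply, Matrix.one_apply, smul_eq_mul, hA]
    rcases eq_or_ne (i : ℕ) (j : ℕ) with h | h
    · have hij : i = j := Fin.ext h
      rw [if_pos hij, if_pos h, if_pos h]; ring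
    · have hij : i ≠ j := fun e => h (congrArg _ e)
      rw [if_neg hij, if_neg h, if_neg h]
      split_ifs <;> ring
  -- M X = e1
  have hMx : M *ᵥ X = e1 := by
    funext i
    rcases i with ⟨k, hk⟩
    cases k with
    | zero =>
      rw [aux_mulVec0 M
        (fun n : ℕ => 2 * lr + ((n : ℝ) + 1) * ((N : ℝ) - (n : ℝ) - 1) * lc)
        (fun n : ℕ => -(((n : ℝ) + 1) * ((N : ℝ) - (n : ℝ) - 1) * lc)) hMent X hk, he1]
      have hI0 : Finset.Icc 1 0 = (∅ : Finset ℕ) := Finset.Icc_eq_empty (by omega)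
      have hD0' : (2 * lr + ((N : ℝ) - 1) * lc) ≠ 0 := by rw [hD] at hD0; linarith
      simp only [hX, hI0, Finset.prod_empty, Fin.val_mk, if_pos rfl, hD]
      push_cast
      field_simp
      rw [div_eq_one_iff_eq (by intro h; apply hD0'; linarith)]; ring
    | succ m =>
      rw [aux_mulVecS M
        (fun n : ℕ => 2 * lr + ((n : ℝ) + 1) * ((N : ℝ) - (n : ℝ) - 1) * lc)
        (fun n : ℕ => -(((n : ℝ) + 1) * ((N : ℝ) - (n : ℝ) - 1) * lc)) hMent X m hk, he1]
      have hxS : X ⟨m + 1, hk⟩ = ((∏ j ∈ Finset.Icc 1 m, a j) * a (m + 1)) / D := by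
        simp only [hX]
        rw [Finset.prod_Icc_succ_top (by omega : 1 ≤ m + 1)]
      have hxm : X ⟨m, by omega⟩ = (∏ j ∈ Finset.Icc 1 m, a j) / D := by simp only [hX]
      rw [hxS, hxm]
      have hne0 : ¬ ((⟨m + 1, hk⟩ : Fin N) : ℕ) = 0 := by simp
      rw [if_neg hne0]
      have hrec := aux_rec N lc lr hlc hlr a ha m (by omega)
      push_cast
      linear_combination ((∏ j ∈ Finset.Icc 1 m, a j) / D) * hrec
  -- invertibility
  have htri : M.BlockTriangular OrderDual.toDual := by
    intro i j hij
    have hlt : (i : ℕ) < (j : ℕ) := hij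
    rw [hMent, if_neg (by omega : ¬ (i : ℕ) = (j : ℕ)),
      if_neg (by omega : ¬ (i : ℕ) = (j : ℕ) + 1)]
  have hdet : IsUnit M.det := by
    rw [Matrix.det_of_lowerTriangular M htri]
    apply isUnit_iff_ne_zero.mpr
    apply Finset.prod_ne_zero_iff.mpr
    intro i _
    rw [hMent, if_pos rfl]
    have hiN : ((i : ℕ) : ℝ) + 1 ≤ (N : ℝ) := by exact_mod_cast i.isLt
    have : (0:ℝ) ≤ (((i : ℕ) : ℝ) + 1) * ((N : ℝ) - ((i : ℕ) : ℝ) - 1) * lc :=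
      mul_nonneg (mul_nonneg (by positivity) (by linarith)) hlc.le
    nlinarith
  have hinv : M⁻¹ *ᵥ e1 = X := by
    calc M⁻¹ *ᵥ e1 = M⁻¹ *ᵥ (M *ᵥ X) := by rw [hMx]
      _ = (M⁻¹ * M) *ᵥ X := by rw [Matrix.mulVec_mulVec]
      _ = X := by rw [Matrix.nonsing_inv_mul M hdet, Matrix.one_mulVec]
  rw [hinv]
  -- row vector w^T A
  have hwA : ∀ j : Fin N, (w ᵥ* A) j =
      (((j : ℕ) : ℝ) + 1) * ((N : ℝ) - ((j : ℕ) : ℝ) - 1) * lc / ((N : ℝ) - 1) := by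
    intro j
    rcases j with ⟨n, hn⟩
    show ∑ i, w i * A i ⟨n, hn⟩ = _
    by_cases hn1 : n + 1 < N
    · have key : ∀ i : Fin N, w i * A i ⟨n, hn⟩
          = (if i = ⟨n, hn⟩ then w ⟨n, hn⟩ * A ⟨n, hn⟩ ⟨n, hn⟩ else 0)
          + (if i = ⟨n + 1, hn1⟩ then w ⟨n + 1, hn1⟩ * A ⟨n + 1, hn1⟩ ⟨n, hn⟩ else 0) := by
        intro i
        rcases i with ⟨p, hp⟩
        rcases eq_or_ne n p with rfl | h1
        · simp
        · rcases eq_or_ne (n + 1) p with rfl | h2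
          · have e1' : ((⟨n + 1, hp⟩ : Fin N)) = (⟨n + 1, hn1⟩ : Fin N) := rfl
            have e2' : ¬ ((⟨n + 1, hp⟩ : Fin N)) = (⟨n, hn⟩ : Fin N) := by
              simp [Fin.ext_iff]
            rw [if_neg e2', if_pos e1', zero_add]
          · have hz : A ⟨p, hp⟩ ⟨n, hn⟩ = 0 := by
              rw [hA, if_neg (by simpa using fun h => h1 h.symm),
                if_neg (by simpa using fun h => h2 h.symm)]
            rw [hz, mul_zero,
              if_neg (by simp [Fin.ext_iff]; omega :
                ¬ ((⟨p, hp⟩ : Fin N)) = (⟨n, hn⟩ : Fin N)),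
              if_neg (by simp [Fin.ext_iff]; omega :
                ¬ ((⟨p, hp⟩ : Fin N)) = (⟨n + 1, hn1⟩ : Fin N)),
              add_zero]
      rw [Finset.sum_congr rfl fun i _ => key i, Finset.sum_add_distrib,
        Finset.sum_ite_eq' univ, Finset.sum_ite_eq' univ]
      simp only [Finset.mem_univ, if_true]
      rw [hw, hw, hA, hA]
      have c1 : ((⟨n, hn⟩ : Fin N) : ℕ) = ((⟨n, hn⟩ : Fin N) : ℕ) := rfl
      have c2 : ¬ ((⟨n + 1, hn1⟩ : Fin N) : ℕ) = ((⟨n, hn⟩ : Fin N) : ℕ) := by simp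
      have c3 : ((⟨n + 1, hn1⟩ : Fin N) : ℕ) = ((⟨n, hn⟩ : Fin N) : ℕ) + 1 := by simp
      rw [if_pos c1, if_neg c2, if_pos c3]
      simp only [Fin.val_mk]
      push_cast
      field_simp
      ring
    · -- last row : n + 1 = N
      have key : ∀ i : Fin N, w i * A i ⟨n, hn⟩
          = (if i = ⟨n, hn⟩ then w ⟨n, hn⟩ * A ⟨n, hn⟩ ⟨n, hn⟩ else 0) := by
        intro i
        rcases i with ⟨p, hp⟩
        rcases eq_or_ne n p with rfl | h1
        · simp
        · have h2 : ¬ p = n + 1 := by omega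
          have hz : A ⟨p, hp⟩ ⟨n, hn⟩ = 0 := by
            rw [hA, if_neg (by simpa using fun h => h1 h.symm), if_neg (by simpa using h2)]
          rw [hz, mul_zero,
            if_neg (by simp [Fin.ext_iff]; omega :
              ¬ ((⟨p, hp⟩ : Fin N)) = (⟨n, hn⟩ : Fin N))]
      rw [Finset.sum_congr rfl fun i _ => key i, Finset.sum_ite_eq' univ]
      simp only [Finset.mem_univ, if_true]
      rw [hw, hA]
      have c1 : ((⟨n, hn⟩ : Fin N) : ℕ) = ((⟨n, hn⟩ : Fin N) : ℕ) := rfl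
      rw [if_pos c1]
      simp only [Fin.val_mk]
      have hz : (N : ℝ) - (n : ℝ) - 1 = 0 := by
        have h' : ((n : ℕ) : ℝ) + 1 = (N : ℝ) := by exact_mod_cast (by omega : n + 1 = N)
        linarith
      have hz2 : (N : ℝ) - ((n : ℝ) + 1) = 0 := by linarith
      rw [hz, hz2]
      ring
  -- left side as a range sum
  have hL : w ⬝ᵥ (A *ᵥ X)
      = ∑ n ∈ Finset.range N,
          ((n : ℝ) + 1) * ((N : ℝ) - (n : ℝ) - 1) * lc / ((N : ℝ) - 1)
            * ((∏ j ∈ Finset.Icc 1 n, a j) / D) := by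
    rw [Matrix.dotProduct_mulVec,
      ← Fin.sum_univ_eq_sum_range (fun n =>
        ((n : ℝ) + 1) * ((N : ℝ) - (n : ℝ) - 1) * lc / ((N : ℝ) - 1)
          * ((∏ j ∈ Finset.Icc 1 n, a j) / D)) N]
    show ∑ j, (w ᵥ* A) j * X j = _
    refine Finset.sum_congr rfl fun j _ => ?_
    rw [hwA j]
  rw [hL]
  -- key telescoping identity
  have hkey := aux_key N lc lr hlc hlr a ha (N - 1) (by omega)
  have hNm : N - 1 + 1 = N := by omega
  rw [hNm] at hkey
  have hzz : (N : ℝ) - ((N - 1 : ℕ) : ℝ) - 1 = 0 := by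
    have h1 : ((N - 1 : ℕ) : ℝ) = (N : ℝ) - 1 := by
      push_cast [Nat.cast_sub (by omega : 1 ≤ N)]
      ring
    rw [h1]; ring
  rw [hzz] at hkey
  simp only [mul_zero, zero_mul] at hkey
  have hsum : ∑ n ∈ Finset.range N,
        (((n : ℝ) + 1) * ((N : ℝ) - (n : ℝ) - 1) * lc * ∏ i ∈ Finset.Icc 1 n, a i)
      = ∑ n ∈ Finset.range N, (2 * lr * (n : ℝ) * ∏ i ∈ Finset.Icc 1 n, a i) := by
    rw [← sub_eq_zero, ← Finset.sum_sub_distrib]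
    calc ∑ n ∈ Finset.range N,
          ((((n : ℝ) + 1) * ((N : ℝ) - (n : ℝ) - 1) * lc * ∏ i ∈ Finset.Icc 1 n, a i)
            - 2 * lr * (n : ℝ) * ∏ i ∈ Finset.Icc 1 n, a i)
        = ∑ n ∈ Finset.range N,
            ((((n : ℝ) + 1) * ((N : ℝ) - (n : ℝ) - 1) * lc - 2 * lr * (n : ℝ))
              * ∏ i ∈ Finset.Icc 1 n, a i) :=
          Finset.sum_congr rfl fun n _ => by ring
      _ = 0 := hkey
  calc ∑ n ∈ Finset.range N,
        ((n : ℝ) + 1) * ((N : ℝ) - (n : ℝ) - 1) * lc / ((N : ℝ) - 1)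
          * ((∏ j ∈ Finset.Icc 1 n, a j) / D)
      = (1 / (((N : ℝ) - 1) * D)) * ∑ n ∈ Finset.range N,
          (((n : ℝ) + 1) * ((N : ℝ) - (n : ℝ) - 1) * lc * ∏ i ∈ Finset.Icc 1 n, a i) := by
        rw [Finset.mul_sum]
        refine Finset.sum_congr rfl fun n _ => ?_
        field_simp
    _ = (1 / (((N : ℝ) - 1) * D)) * ∑ n ∈ Finset.range N,
          (2 * lr * (n : ℝ) * ∏ i ∈ Finset.Icc 1 n, a i) := by rw [hsum]
    _ = 2 * lr / D * ∑ k ∈ Finset.Icc 1 N,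
          (((k : ℝ) - 1) / ((N : ℝ) - 1) * ∏ j ∈ Finset.Icc 1 (k - 1), a j) := by
        rw [← Finset.Ico_add_one_right_eq_Icc, Finset.sum_Ico_eq_sum_range]
        simp only [Nat.add_sub_cancel, Nat.add_sub_cancel_left]
        rw [Finset.mul_sum, Finset.mul_sum]
        refine Finset.sum_congr rfl fun n _ => ?_
        push_cast
        field_simp
        ring
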